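/- Let A = ℂ² with basis {e₁, e₂} and product e₁e₁ = e₁, e₂e₂ = e₂, e₁e₂ = e₂e₁ = 0 (the Novikov algebra (N1)). Then a linear map α with matrix entries a₁, b₁, a₂, b₂ (α(e₁) = a₁e₁ + a₂e₂, α(e₂) = b₁e₁ + b₂e₂) is an algebra morphism if and only if each of a₁, a₂, b₁, b₂ lies in {0, 1} and a₁b₁ = 0 = a₂b₂. In particular, A has exactly nine algebra endomorphisms. -/
import Mathlib

/-- The 2-dimensional complex Novikov algebra (N1): e₁e₁ = e₁, e₂e₂ = e₂,
e₁e₂ = e₂e₁ = 0, extended bilinearly. -/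
def muN1 : (Fin 2 → ℂ) → (Fin 2 → ℂ) → (Fin 2 → ℂ) :=
  fun u v => ![u 0 * v 0, u 1 * v 1]

/-- The linear map sending `e₁ ↦ A`, `e₂ ↦ B`. -/
def Lmap (A B : Fin 2 → ℂ) : (Fin 2 → ℂ) →ₗ[ℂ] (Fin 2 → ℂ) where
  toFun u := u 0 • A + u 1 • B
  map_add' u v := by funext i; simp [add_smul]; ring
  map_smul' c u := by funext i; simp; ring

lemma expand (α : (Fin 2 → ℂ) →ₗ[ℂ] (Fin 2 → ℂ)) (u : Fin 2 → ℂ) :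
    α u = u 0 • α ![1, 0] + u 1 • α ![0, 1] := by
  have hu : u = u 0 • ![(1:ℂ), 0] + u 1 • ![(0:ℂ), 1] := by
    funext i; fin_cases i <;> simp
  conv_lhs => rw [hu]
  rw [map_add, map_smul, map_smul]

lemma sq_cases {a : ℂ} (h : a = a * a) : a = 0 ∨ a = 1 := by
  have : a * (a - 1) = 0 := by linear_combination -h
  rcases mul_eq_zero.mp this with h' | h'
  · exact Or.inl h'
  · exact Or.inr (sub_eq_zero.mp h')

lemma classify (α : (Fin 2 → ℂ) →ₗ[ℂ] (Fin 2 → ℂ)) :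
    (∀ u v, α (muN1 u v) = muN1 (α u) (α v)) ↔
      ((α ![1, 0]) 0 ∈ ({0, 1} : Set ℂ) ∧ (α ![1, 0]) 1 ∈ ({0, 1} : Set ℂ) ∧
       (α ![0, 1]) 0 ∈ ({0, 1} : Set ℂ) ∧ (α ![0, 1]) 1 ∈ ({0, 1} : Set ℂ) ∧
       (α ![1, 0]) 0 * (α ![0, 1]) 0 = 0 ∧
       (α ![1, 0]) 1 * (α ![0, 1]) 1 = 0) := by
  constructor
  · intro h
    have h11 := h ![1, 0] ![1, 0]
    have h22 := h ![0, 1] ![0, 1]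
    have h12 := h ![1, 0] ![0, 1]
    have e1 : muN1 ![(1:ℂ), 0] ![1, 0] = ![1, 0] := by
      funext i; fin_cases i <;> simp [muN1]
    have e2 : muN1 ![(0:ℂ), 1] ![0, 1] = ![0, 1] := by
      funext i; fin_cases i <;> simp [muN1]
    have e12 : muN1 ![(1:ℂ), 0] ![0, 1] = 0 := by
      funext i; fin_cases i <;> simp [muN1]
    rw [e1] at h11; rw [e2] at h22; rw [e12, map_zero] at h12
    have c0 := congrFun h11 0
    have c1 := congrFun h11 1
    have d0 := congrFun h22 0
    have d1 := congrFun h22 1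
    have p0 : (α ![1,0]) 0 * (α ![0,1]) 0 = 0 := by
      have := congrFun h12 0
      simp only [muN1, Matrix.cons_val_zero, Pi.zero_apply] at this
      exact this.symm
    have p1 : (α ![1,0]) 1 * (α ![0,1]) 1 = 0 := by
      have := congrFun h12 1
      simp only [muN1, Matrix.cons_val_one, Matrix.head_cons, Pi.zero_apply] at this
      exact this.symm
    simp [muN1] at c0 c1 d0 d1
    exact ⟨sq_cases c0, sq_cases c1, sq_cases d0, sq_cases d1, p0, p1⟩
  · rintro ⟨ha0, ha1, hb0, hb1, hp0, hp1⟩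
    intro u v
    have ha0' : (α ![1,0]) 0 * (α ![1,0]) 0 = (α ![1,0]) 0 := by
      rcases ha0 with h | h <;> rw [h] <;> ring
    have ha1' : (α ![1,0]) 1 * (α ![1,0]) 1 = (α ![1,0]) 1 := by
      rcases ha1 with h | h <;> rw [h] <;> ring
    have hb0' : (α ![0,1]) 0 * (α ![0,1]) 0 = (α ![0,1]) 0 := by
      rcases hb0 with h | h <;> rw [h] <;> ring
    have hb1' : (α ![0,1]) 1 * (α ![0,1]) 1 = (α ![0,1]) 1 := by
      rcases hb1 with h | h <;> rw [h] <;> ring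
    funext i
    fin_cases i
    · have := congrFun (expand α (muN1 u v)) 0
      have hu := congrFun (expand α u) 0
      have hv := congrFun (expand α v) 0
      simp [muN1] at this hu hv ⊢
      rw [this, hu, hv]
      linear_combination (-(u 0 * v 0)) * ha0' - (u 0 * v 1 + u 1 * v 0) * hp0 -
        (u 1 * v 1) * hb0'
    · have := congrFun (expand α (muN1 u v)) 1
      have hu := congrFun (expand α u) 1
      have hv := congrFun (expand α v) 1
      simp [muN1] at this hu hv ⊢
      rw [this, hu, hv]
      linear_combination (-(u 0 * v 0)) * ha1' - (u 0 * v 1 + u 1 * v 0) * hp1 -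
        (u 1 * v 1) * hb1'


def gN : Fin 3 → ℂ × ℂ := ![(0,0),(0,1),(1,0)]

def FN : Fin 3 × Fin 3 → ((Fin 2 → ℂ) →ₗ[ℂ] (Fin 2 → ℂ)) := fun p =>
  Lmap ![(gN p.1).1, (gN p.2).1] ![(gN p.1).2, (gN p.2).2]

lemma gN_inj : Function.Injective gN := by
  intro i j h
  fin_cases i <;> fin_cases j <;> simp_all [gN, Prod.ext_iff]

lemma FN_e1 (p : Fin 3 × Fin 3) : FN p ![1, 0] = ![(gN p.1).1, (gN p.2).1] := by
  funext i; fin_cases i <;> simp [FN, Lmap]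

lemma FN_e2 (p : Fin 3 × Fin 3) : FN p ![0, 1] = ![(gN p.1).2, (gN p.2).2] := by
  funext i; fin_cases i <;> simp [FN, Lmap]

lemma FN_inj : Function.Injective FN := by
  intro p q h
  have e1 : (![(gN p.1).1,(gN p.2).1] : Fin 2 → ℂ) = ![(gN q.1).1,(gN q.2).1] := by
    rw [← FN_e1, ← FN_e1, h]
  have e2 : (![(gN p.1).2,(gN p.2).2] : Fin 2 → ℂ) = ![(gN q.1).2,(gN q.2).2] := by
    rw [← FN_e2, ← FN_e2, h]
  have g1 : gN p.1 = gN q.1 := Prod.ext (congrFun e1 0) (congrFun e2 0)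
  have g2 : gN p.2 = gN q.2 := Prod.ext (congrFun e1 1) (congrFun e2 1)
  exact Prod.ext (gN_inj g1) (gN_inj g2)

lemma eq_FN (α : (Fin 2 → ℂ) →ₗ[ℂ] (Fin 2 → ℂ)) (i j : Fin 3)
    (hi : ((α ![1,0]) 0, (α ![0,1]) 0) = gN i)
    (hj : ((α ![1,0]) 1, (α ![0,1]) 1) = gN j) : α = FN (i, j) := by
  apply LinearMap.ext; intro u
  rw [expand α u, expand (FN (i,j)) u, FN_e1, FN_e2]
  have hi1 : (α ![1,0]) 0 = (gN i).1 := congrArg Prod.fst hi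
  have hi2 : (α ![0,1]) 0 = (gN i).2 := congrArg Prod.snd hi
  have hj1 : (α ![1,0]) 1 = (gN j).1 := congrArg Prod.fst hj
  have hj2 : (α ![0,1]) 1 = (gN j).2 := congrArg Prod.snd hj
  have e1 : α ![1,0] = ![(gN i).1, (gN j).1] := by
    funext k; fin_cases k <;> simp [hi1, hj1]
  have e2 : α ![0,1] = ![(gN i).2, (gN j).2] := by
    funext k; fin_cases k <;> simp [hi2, hj2]
  rw [e1, e2]

theorem N1_morphisms_classification :
    (∀ α : (Fin 2 → ℂ) →ₗ[ℂ] (Fin 2 → ℂ),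
      (∀ u v, α (muN1 u v) = muN1 (α u) (α v)) ↔
      ((α ![1, 0]) 0 ∈ ({0, 1} : Set ℂ) ∧ (α ![1, 0]) 1 ∈ ({0, 1} : Set ℂ) ∧
       (α ![0, 1]) 0 ∈ ({0, 1} : Set ℂ) ∧ (α ![0, 1]) 1 ∈ ({0, 1} : Set ℂ) ∧
       (α ![1, 0]) 0 * (α ![0, 1]) 0 = 0 ∧
       (α ![1, 0]) 1 * (α ![0, 1]) 1 = 0)) ∧
    Set.ncard {α : (Fin 2 → ℂ) →ₗ[ℂ] (Fin 2 → ℂ) |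
      ∀ u v, α (muN1 u v) = muN1 (α u) (α v)} = 9 := by
  refine ⟨classify, ?_⟩
  have hset : {α : (Fin 2 → ℂ) →ₗ[ℂ] (Fin 2 → ℂ) |
      ∀ u v, α (muN1 u v) = muN1 (α u) (α v)} = Set.range FN := by
    ext α
    constructor
    · intro hα
      obtain ⟨ha0, ha1, hb0, hb1, hp0, hp1⟩ := (classify α).mp hα
      simp only [Set.mem_insert_iff, Set.mem_singleton_iff] at ha0 ha1 hb0 hb1
      have hi : ∃ i : Fin 3, ((α ![1,0]) 0, (α ![0,1]) 0) = gN i := by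
        rcases ha0 with h1 | h1 <;> rcases hb0 with h2 | h2
        · exact ⟨0, by simp [gN, h1, h2]⟩
        · exact ⟨1, by simp [gN, h1, h2]⟩
        · exact ⟨2, by simp [gN, h1, h2]⟩
        · rw [h1, h2] at hp0; norm_num at hp0
      have hj : ∃ j : Fin 3, ((α ![1,0]) 1, (α ![0,1]) 1) = gN j := by
        rcases ha1 with h1 | h1 <;> rcases hb1 with h2 | h2
        · exact ⟨0, by simp [gN, h1, h2]⟩
        · exact ⟨1, by simp [gN, h1, h2]⟩
        · exact ⟨2, by simp [gN, h1, h2]⟩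
        · rw [h1, h2] at hp1; norm_num at hp1
      obtain ⟨i, hi⟩ := hi
      obtain ⟨j, hj⟩ := hj
      exact ⟨(i, j), (eq_FN α i j hi hj).symm⟩
    · rintro ⟨⟨i, j⟩, rfl⟩
      apply (classify _).mpr
      fin_cases i <;> fin_cases j <;>
        simp [FN_e1, FN_e2, gN]
  rw [hset, ← Set.image_univ, Set.ncard_image_of_injective _ FN_inj, Set.ncard_univ]
  simp
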